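/- arXiv:1108.1508 — 3 statements merged into one kernel-verified Lean document; each statement's English description precedes it below -/
import Mathlib

section
/- Fix a prime r, a primitive root q mod r, and n with 1 ≤ n ≤ r-2. The map i ↦ {q^i} - {q^{i+n}} from {1, 2, ..., r-1-n} to the integers is injective; consequently the set {S(i,n) : 1 ≤ i ≤ r-1-n} has cardinality exactly r-1-n. -/
theorem stmt2 (r q n : ℕ) (hr : r.Prime)
    (hq : IsPrimitiveRoot (q : ZMod r) (r - 1))
    (hn1 : 1 ≤ n) (hn2 : n ≤ r - 2) :
    Set.InjOn (fun i => ((q ^ i % r : ℕ) : ℤ) - ((q ^ (i + n) % r : ℕ) : ℤ))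
      (Set.Icc 1 (r - 1 - n)) ∧
    ((Finset.Icc 1 (r - 1 - n)).image
      (fun i => ((q ^ i % r : ℕ) : ℤ) - ((q ^ (i + n) % r : ℕ) : ℤ))).card
      = r - 1 - n := by
  have hr3 : 3 ≤ r := by
    by_contra h
    interval_cases r <;> omega
  haveI : Fact r.Prime := ⟨hr⟩
  have hn' : n < r - 1 := by omega
  have hqn : (q : ZMod r) ^ n ≠ 1 := hq.pow_ne_one_of_pos_of_lt (by omega) hn'
  have hinj : Set.InjOn (fun i => ((q ^ i % r : ℕ) : ℤ) - ((q ^ (i + n) % r : ℕ) : ℤ))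
      (Set.Icc 1 (r - 1 - n)) := by
    intro i hi j hj h
    simp only [Set.mem_Icc] at hi hj
    -- cast the integer equality into ZMod r
    have hz : (q : ZMod r) ^ i - (q : ZMod r) ^ (i + n)
        = (q : ZMod r) ^ j - (q : ZMod r) ^ (j + n) := by
      have := congrArg (fun z : ℤ => (z : ZMod r)) h
      push_cast [ZMod.natCast_mod] at this
      exact this
    have hfac : (q : ZMod r) ^ i * (1 - (q : ZMod r) ^ n)
        = (q : ZMod r) ^ j * (1 - (q : ZMod r) ^ n) := by
      rw [pow_add, pow_add] at hz
      ring_nf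
      ring_nf at hz
      linear_combination hz
    have hne : (1 - (q : ZMod r) ^ n) ≠ 0 := by
      intro h0
      exact hqn (by linear_combination -h0)
    have hpow : (q : ZMod r) ^ i = (q : ZMod r) ^ j := mul_right_cancel₀ hne hfac
    exact hq.pow_inj (by omega) (by omega) hpow
  refine ⟨hinj, ?_⟩
  rw [Finset.card_image_of_injOn (by rwa [Finset.coe_Icc]), Nat.card_Icc]
  omega
end

section
/- Let r be an odd prime and q a primitive root mod r with q odd. Let σ_i be the parity (element of Z/2Z) of {q^i} - {q^{i+1}}, and let M_0 = {i ∈ {1,...,r-1} : σ_i = 0}, M_1 = {i ∈ {1,...,r-1} : σ_i = 1}. Then | |M_0| - |M_1| | ≤ r/q + q - 1. -/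
open Finset

def cc (q r j : ℕ) : ℕ := (j * r + (q - 1)) / q

lemma cc_le {q : ℕ} (r : ℕ) (hq : 0 < q) (j a : ℕ) : cc q r j ≤ a ↔ j * r ≤ q * a := by
  rw [cc, Nat.div_le_iff_le_mul_add_pred hq]
  omega

lemma cc_pos {q r : ℕ} (hq : 0 < q) (hr : 0 < r) {j : ℕ} (hj : 1 ≤ j) : 1 ≤ cc q r j := by
  by_contra h
  push_neg at h
  have h2 := (cc_le r hq j 0).mp (by omega)
  have : 0 < j * r := Nat.mul_pos hj hr
  omega

lemma cc_E_nonneg {q r : ℕ} (hq : 0 < q) (j : ℕ) : j * r ≤ q * cc q r j :=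
  (cc_le r hq j _).mp le_rfl

lemma cc_E_le (q r : ℕ) (j : ℕ) : q * cc q r j ≤ j * r + (q - 1) := by
  rw [cc]
  exact le_trans (le_of_eq (mul_comm _ _)) (Nat.div_mul_le_self _ _)

lemma cc_mono {q r : ℕ} (hq : 0 < q) (j : ℕ) : cc q r j ≤ cc q r (j+1) := by
  rw [cc_le r hq]
  calc j * r ≤ (j+1) * r := Nat.mul_le_mul_right _ (by omega)
  _ ≤ q * cc q r (j+1) := cc_E_nonneg hq _

lemma cc_E_pos {q r : ℕ} (hq : 0 < q) (hcop : Nat.Coprime q r) {j : ℕ} (hj1 : 1 ≤ j)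
    (hjq : j < q) : j * r < q * cc q r j := by
  rcases Nat.lt_or_ge (j * r) (q * cc q r j) with h | h
  · exact h
  · exfalso
    have heq : q * cc q r j = j * r := le_antisymm h (cc_E_nonneg hq j)
    have hdvd : q ∣ j * r := ⟨cc q r j, heq.symm⟩
    have := Nat.le_of_dvd hj1 (hcop.dvd_of_dvd_mul_right hdvd)
    omega

lemma div_eq_iff' {r : ℕ} (hr : 0 < r) (a j : ℕ) : a / r = j ↔ j * r ≤ a ∧ a < (j+1) * r := by
  constructor
  · rintro rfl
    have hdm := Nat.div_add_mod a r
    have hlt : a % r < r := Nat.mod_lt _ hr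
    have h1 : (a/r) * r = r * (a/r) := mul_comm _ _
    have h2 : (a/r+1) * r = r * (a/r) + r := by ring
    omega
  · rintro ⟨h1, h2⟩
    exact Nat.div_eq_of_lt_le h1 h2

lemma fiber (q r : ℕ) (hq : 0 < q) (hr : 0 < r) {j : ℕ} (hj : j < q) :
    (Finset.Icc 1 (r-1)).filter (fun a => q*a/r = j) = Finset.Ico (max (cc q r j) 1) (cc q r (j+1)) := by
  ext a
  simp only [mem_filter, mem_Icc, mem_Ico, max_le_iff]
  rw [div_eq_iff' hr]
  constructor
  · rintro ⟨⟨h1, h2⟩, hlow, hhigh⟩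
    refine ⟨⟨(cc_le r hq j a).mpr hlow, h1⟩, ?_⟩
    by_contra h
    push_neg at h
    have := (cc_le r hq (j+1) a).mp h
    omega
  · rintro ⟨⟨hcj, h1⟩, hcj1⟩
    have hlow : j * r ≤ q * a := (cc_le r hq j a).mp hcj
    have hhigh : q * a < (j+1) * r := by
      by_contra h
      push_neg at h
      have := (cc_le r hq (j+1) a).mpr h
      omega
    have har : a < r := by
      have h2 : (j+1) * r ≤ q * r := Nat.mul_le_mul_right _ (by omega)
      have h3 : q * a < q * r := by omega
      exact Nat.lt_of_mul_lt_mul_left h3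
    exact ⟨⟨h1, by omega⟩, hlow, hhigh⟩

lemma pairsum (f : ℕ → ℤ) (m : ℕ) :
    ∑ j ∈ Finset.range (2*m+1), f j = f 0 + ∑ k ∈ Finset.range m, (f (2*k+1) + f (2*k+2)) := by
  induction m with
  | zero => simp
  | succ n ih =>
    have h : 2*(n+1)+1 = (2*n+1) + 1 + 1 := by ring
    rw [h, Finset.sum_range_succ, Finset.sum_range_succ, ih, Finset.sum_range_succ]
    ring

lemma img (r q : ℕ) (hr : r.Prime) (hr3 : 3 ≤ r) (hq : IsPrimitiveRoot (q : ZMod r) (r - 1)) :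
    Set.InjOn (fun i => q^i % r) (Finset.Icc 1 (r-1) : Finset ℕ) ∧
    (Finset.Icc 1 (r-1)).image (fun i => q^i % r) = Finset.Icc 1 (r-1) := by
  haveI := Fact.mk hr
  have horder : orderOf (q : ZMod r) = r - 1 := hq.eq_orderOf.symm
  have hqne : (q : ZMod r) ≠ 0 := by
    intro h
    rw [h] at horder
    have h2 : orderOf (0 : ZMod r) = 0 := by
      rw [orderOf_eq_zero_iff']
      intro n hn hpow
      rw [zero_pow (by omega : n ≠ 0)] at hpow
      exact one_ne_zero hpow.symm
    omega
  have hcast : ∀ i : ℕ, ((q^i % r : ℕ) : ZMod r) = (q : ZMod r)^i := by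
    intro i; rw [ZMod.natCast_mod]; push_cast; ring
  have hne : ∀ i : ℕ, ((q : ZMod r))^i ≠ 0 := fun i => pow_ne_zero _ hqne
  have key : ∀ i j : ℕ, i ∈ Finset.Icc 1 (r-1) → j ∈ Finset.Icc 1 (r-1) → i ≤ j →
      (q:ZMod r)^i = (q:ZMod r)^j → i = j := by
    intro i j hi hj hij hpow
    rw [Finset.mem_Icc] at hi hj
    have h1 : (q:ZMod r)^i * (q:ZMod r)^(j-i) = (q:ZMod r)^i * 1 := by
      rw [mul_one, ← pow_add, Nat.add_sub_cancel' hij]; exact hpow.symm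
    have h2 : (q:ZMod r)^(j-i) = 1 := mul_left_cancel₀ (hne i) h1
    have h3 : (r-1) ∣ (j - i) := horder ▸ orderOf_dvd_of_pow_eq_one h2
    have h4 : j - i < r - 1 := by omega
    have := Nat.eq_zero_of_dvd_of_lt h3 h4
    omega
  have hinj : Set.InjOn (fun i => q^i % r) (Finset.Icc 1 (r-1) : Finset ℕ) := by
    intro i hi j hj hij
    simp only [Finset.mem_coe] at hi hj
    have hij' : q ^ i % r = q ^ j % r := hij
    have hc : (q:ZMod r)^i = (q:ZMod r)^j := by rw [← hcast, ← hcast, hij']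
    rcases le_total i j with h | h
    · exact key i j hi hj h hc
    · exact (key j i hj hi h hc.symm).symm
  refine ⟨hinj, ?_⟩
  apply Finset.eq_of_subset_of_card_le
  · intro x hx
    obtain ⟨i, hi, rfl⟩ := Finset.mem_image.mp hx
    rw [Finset.mem_Icc]
    have h1 : q^i % r < r := Nat.mod_lt _ (by omega)
    have h2 : q^i % r ≠ 0 := by
      intro h
      apply hne i
      rw [← hcast, h]; simp
    omega
  · rw [Finset.card_image_of_injOn hinj]

lemma par_lem (q r a : ℕ) (hq : q % 2 = 1) (hr : r % 2 = 1) :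
    (((a:ℤ) - ((q*a % r : ℕ) : ℤ)) % 2 = 0) ↔ (q*a/r) % 2 = 0 := by
  have h0 : q*a % r + r * (q*a/r) = q*a := Nat.mod_add_div _ _
  have h1 : (q*a) % 2 = a % 2 := by simp [Nat.mul_mod, hq]
  have h2 : (r * (q*a/r)) % 2 = (q*a/r) % 2 := by simp [Nat.mul_mod, hr]
  generalize hK : q*a/r = K at *
  generalize hM : q*a % r = M at *
  generalize hP : q*a = P at *
  generalize hRK : r*K = RK at *
  omega

def fcc (q r j : ℕ) : ℤ :=
  ((cc q r (j+1) : ℤ) - ((max (cc q r j) 1 : ℕ) : ℤ)) * (if j % 2 = 0 then 1 else -1)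

lemma f0_bound (q r : ℕ) (hq1 : 1 ≤ q) (hr0 : 0 < r) :
    0 ≤ fcc q r 0 ∧ fcc q r 0 * q ≤ (r:ℤ) - 1 := by
  have hcc0 : cc q r 0 = 0 := by
    rw [cc]
    have h : 0 * r + (q - 1) = q - 1 := by ring
    rw [h]
    exact Nat.div_eq_of_lt (by omega)
  have hcc1 : 1 ≤ cc q r 1 := cc_pos (by omega) hr0 le_rfl
  have hE := cc_E_le q r 1
  have hif : (if (0:ℕ) % 2 = 0 then (1:ℤ) else -1) = 1 := if_pos (by norm_num)
  rw [fcc, hif, mul_one]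
  simp only [show (0+1:ℕ) = 1 from rfl, hcc0]
  have hmax : (max 0 1 : ℕ) = 1 := rfl
  rw [hmax]
  have hE' : (q:ℤ) * (cc q r 1 : ℤ) ≤ 1 * r + (q - 1) := by
    zify [hq1] at hE
    push_cast at hE
    linarith
  have h1 : (1:ℤ) ≤ (cc q r 1 : ℤ) := by exact_mod_cast hcc1
  have hq0' : (1:ℤ) ≤ (q:ℤ) := by exact_mod_cast hq1
  constructor
  · push_cast
    linarith
  · push_cast
    nlinarith [hE', h1, hq0']

lemma pair_bound (q r m k : ℕ) (hq1 : 1 ≤ q) (hr0 : 0 < r) (hcop : Nat.Coprime q r)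
    (hm : q = 2*m+1) (hk : k < m) :
    |fcc q r (2*k+1) + fcc q r (2*k+2)| * q ≤ 2*(q:ℤ) - 3 := by
  have hq0 : 0 < q := by omega
  have hmax1 : (max (cc q r (2*k+1)) 1) = cc q r (2*k+1) :=
    max_eq_left (cc_pos hq0 hr0 (by omega))
  have hmax2 : (max (cc q r (2*k+2)) 1) = cc q r (2*k+2) :=
    max_eq_left (cc_pos hq0 hr0 (by omega))
  have hif1 : (if (2*k+1) % 2 = 0 then (1:ℤ) else -1) = -1 := if_neg (by omega)
  have hif2 : (if (2*k+2) % 2 = 0 then (1:ℤ) else -1) = 1 := if_pos (by omega)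
  have e1u := cc_E_le q r (2*k+1)
  have e1p := cc_E_pos hq0 hcop (j := 2*k+1) (by omega) (by omega)
  have e2p := cc_E_pos hq0 hcop (j := 2*k+2) (by omega) (by omega)
  have e2u := cc_E_le q r (2*k+2)
  have e3l := cc_E_nonneg (q:=q) (r:=r) hq0 (2*k+3)
  have e3u := cc_E_le q r (2*k+3)
  zify [hq1] at e1p e1u e2p e2u e3l e3u
  have hq0' : (0:ℤ) ≤ q := by positivity
  have key : (fcc q r (2*k+1) + fcc q r (2*k+2)) * q
      = ((q:ℤ) * cc q r (2*k+3) - (2*(k:ℤ)+3)*r) - 2*((q:ℤ)*(cc q r (2*k+2)) - (2*(k:ℤ)+2)*r)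
        + ((q:ℤ)*(cc q r (2*k+1)) - (2*(k:ℤ)+1)*r) := by
    rw [fcc, fcc, hmax1, hmax2, hif1, hif2]
    simp only [show (2*k+1+1) = 2*k+2 from rfl, show (2*k+2+1) = 2*k+3 from rfl]
    push_cast
    ring
  calc |fcc q r (2*k+1) + fcc q r (2*k+2)| * q
      = |(fcc q r (2*k+1) + fcc q r (2*k+2)) * q| := by rw [abs_mul, abs_of_nonneg hq0']
    _ = |((q:ℤ) * cc q r (2*k+3) - (2*(k:ℤ)+3)*r) - 2*((q:ℤ)*(cc q r (2*k+2)) - (2*(k:ℤ)+2)*r)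
        + ((q:ℤ)*(cc q r (2*k+1)) - (2*(k:ℤ)+1)*r)| := by rw [key]
    _ ≤ 2*(q:ℤ) - 3 := by
        rw [abs_le]
        push_cast at e1p e1u e2p e2u e3l e3u
        constructor <;> linarith
theorem stmt3 (r q : ℕ) (hr : r.Prime) (hrodd : Odd r)
    (hq : IsPrimitiveRoot (q : ZMod r) (r - 1)) (hqodd : Odd q) :
    abs
      (((((Finset.Icc 1 (r - 1)).filter
          (fun i => (((q ^ i % r : ℕ) : ℤ) - ((q ^ (i + 1) % r : ℕ) : ℤ)) % 2 = 0)).card : ℝ))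
      - ((((Finset.Icc 1 (r - 1)).filter
          (fun i => (((q ^ i % r : ℕ) : ℤ) - ((q ^ (i + 1) % r : ℕ) : ℤ)) % 2 = 1)).card : ℝ)))
      ≤ (r : ℝ) / q + q - 1 := by
  classical
  have hr3 : 3 ≤ r := by
    have h2 := hr.two_le
    rcases hrodd with ⟨t, ht⟩
    omega
  have hq1 : 1 ≤ q := by
    rcases hqodd with ⟨t, ht⟩
    omega
  set A := ((Finset.Icc 1 (r - 1)).filter
      (fun i => (((q ^ i % r : ℕ) : ℤ) - ((q ^ (i + 1) % r : ℕ) : ℤ)) % 2 = 0)).card with hA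
  set B := ((Finset.Icc 1 (r - 1)).filter
      (fun i => (((q ^ i % r : ℕ) : ℤ) - ((q ^ (i + 1) % r : ℕ) : ℤ)) % 2 = 1)).card with hB
  have hBalt : B = ((Finset.Icc 1 (r-1)).filter
      (fun i => ¬ ((((q ^ i % r : ℕ):ℤ) - ((q ^ (i+1) % r : ℕ):ℤ)) % 2 = 0))).card := by
    rw [hB]
    congr 1
    apply Finset.filter_congr
    intro i _
    have h2 := Int.emod_two_eq (((q ^ i % r : ℕ):ℤ) - ((q ^ (i+1) % r : ℕ):ℤ))
    constructor
    · intro h; omega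
    · intro h; omega
  have hsum : A + B = r - 1 := by
    rw [hBalt, hA, Finset.card_filter_add_card_filter_not, Nat.card_Icc]
    omega
  have hqR : (0:ℝ) < q := by positivity
  have hsumR : (A:ℝ) + B = (r:ℝ) - 1 := by
    have h : ((A + B : ℕ) : ℝ) = ((r - 1 : ℕ) : ℝ) := by rw [hsum]
    rw [Nat.cast_add, Nat.cast_sub (by omega : 1 ≤ r)] at h
    push_cast at h ⊢
    linarith
  have hAnn : (0:ℝ) ≤ A := Nat.cast_nonneg _
  have hBnn : (0:ℝ) ≤ B := Nat.cast_nonneg _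
  by_cases hqr : r ≤ q
  · -- trivial case
    have hrq : (r:ℝ) ≤ q := by exact_mod_cast hqr
    have hdiv : (0:ℝ) ≤ (r:ℝ)/q := by positivity
    rw [abs_le]
    constructor <;> linarith
  push_neg at hqr
  have hq0 : 0 < q := by omega
  have hr0 : 0 < r := by omega
  have hcop : Nat.Coprime q r := by
    have hnd : ¬ (r ∣ q) := fun hd => absurd (Nat.le_of_dvd hq0 hd) (by omega)
    exact (hr.coprime_iff_not_dvd.mpr hnd).symm
  obtain ⟨m, hm⟩ := hqodd
  have hmq : q = 2*m + 1 := by omega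
  have himg := img r q hr hr3 hq
  have hcond : ∀ i : ℕ, (((((q ^ i % r : ℕ):ℤ) - ((q ^ (i+1) % r : ℕ):ℤ)) % 2 = 0)) ↔
      (q * (q ^ i % r) / r) % 2 = 0 := by
    intro i
    have hp : q^(i+1) % r = (q * (q^i % r)) % r := by
      simp [pow_succ, Nat.mul_mod, Nat.mod_mod_of_dvd _ dvd_rfl, mul_comm]
    rw [hp]
    exact par_lem q r (q^i % r) (Nat.odd_iff.mp ⟨m, hm⟩) (Nat.odd_iff.mp hrodd)
  -- A as a filter over residues
  have hAeq : A = ((Finset.Icc 1 (r-1)).filter (fun a => (q*a/r) % 2 = 0)).card := by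
    rw [hA]
    conv_rhs => rw [← himg.2, Finset.filter_image]
    rw [Finset.card_image_of_injOn
      (himg.1.mono (Finset.coe_subset.mpr (Finset.filter_subset _ _)))]
    congr 1
    apply Finset.filter_congr
    intro i _
    simpa using (hcond i)
  have hBeq : B = ((Finset.Icc 1 (r-1)).filter (fun a => ¬ ((q*a/r) % 2 = 0))).card := by
    rw [hBalt]
    conv_rhs => rw [← himg.2, Finset.filter_image]
    rw [Finset.card_image_of_injOn
      (himg.1.mono (Finset.coe_subset.mpr (Finset.filter_subset _ _)))]
    congr 1
    apply Finset.filter_congr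
    intro i _
    simpa using not_congr (hcond i)
  -- A - B as a sum of signs
  have hS : (A:ℤ) - (B:ℤ) =
      ∑ a ∈ Finset.Icc 1 (r-1), (if (q*a/r) % 2 = 0 then (1:ℤ) else -1) := by
    rw [hAeq, hBeq, Finset.sum_ite, Finset.sum_const, Finset.sum_const]
    simp [nsmul_eq_mul]
    ring
  -- fiberwise
  have hmaps : ∀ a ∈ Finset.Icc 1 (r-1), q*a/r ∈ Finset.range q := by
    intro a ha
    rw [Finset.mem_Icc] at ha
    rw [Finset.mem_range, Nat.div_lt_iff_lt_mul hr0]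
    have : a < r := by omega
    exact (Nat.mul_lt_mul_left hq0).mpr this
  have hfib : (∑ a ∈ Finset.Icc 1 (r-1), (if (q*a/r) % 2 = 0 then (1:ℤ) else -1)) =
      ∑ j ∈ Finset.range q, fcc q r j := by
    rw [← Finset.sum_fiberwise_of_maps_to hmaps]
    apply Finset.sum_congr rfl
    intro j hj
    rw [Finset.mem_range] at hj
    have hcongr : ∀ a ∈ (Finset.Icc 1 (r-1)).filter (fun a => q*a/r = j),
        (if (q*a/r) % 2 = 0 then (1:ℤ) else -1) = (if j % 2 = 0 then (1:ℤ) else -1) := by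
      intro a ha
      rw [(Finset.mem_filter.mp ha).2]
    rw [Finset.sum_congr rfl hcongr, Finset.sum_const, fiber q r hq0 hr0 hj, Nat.card_Ico]
    have hle : max (cc q r j) 1 ≤ cc q r (j+1) := by
      have h1 := cc_mono (q:=q) (r:=r) hq0 j
      have h2 := cc_pos (q:=q) (r:=r) hq0 hr0 (j := j+1) (by omega)
      simp only [max_le_iff]
      omega
    rw [nsmul_eq_mul, fcc]
    congr 1
    push_cast [hle]
    ring
  -- pairing and bound
  have hpairing : (A:ℤ) - (B:ℤ) = fcc q r 0 +
      ∑ k ∈ Finset.range m, (fcc q r (2*k+1) + fcc q r (2*k+2)) := by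
    rw [hS, hfib, show Finset.range q = Finset.range (2*m+1) from by rw [hmq]]
    exact pairsum (fcc q r) m
  have hf0 := f0_bound q r hq1 hr0
  have habs : |(A:ℤ) - (B:ℤ)| * q ≤ (r:ℤ) + q * (q - 1) := by
    have h1 : |(A:ℤ) - (B:ℤ)| ≤ fcc q r 0 +
        ∑ k ∈ Finset.range m, |fcc q r (2*k+1) + fcc q r (2*k+2)| := by
      rw [hpairing]
      calc |fcc q r 0 + ∑ k ∈ Finset.range m, (fcc q r (2*k+1) + fcc q r (2*k+2))|
          ≤ |fcc q r 0| + |∑ k ∈ Finset.range m, (fcc q r (2*k+1) + fcc q r (2*k+2))| :=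
            abs_add_le _ _
        _ ≤ fcc q r 0 + ∑ k ∈ Finset.range m, |fcc q r (2*k+1) + fcc q r (2*k+2)| := by
            rw [abs_of_nonneg hf0.1]
            exact add_le_add (le_refl _) (Finset.abs_sum_le_sum_abs _ _)
    have hq0' : (0:ℤ) ≤ q := by positivity
    calc |(A:ℤ) - (B:ℤ)| * q
        ≤ (fcc q r 0 + ∑ k ∈ Finset.range m, |fcc q r (2*k+1) + fcc q r (2*k+2)|) * q :=
          mul_le_mul_of_nonneg_right h1 hq0'
      _ = fcc q r 0 * q + ∑ k ∈ Finset.range m, (|fcc q r (2*k+1) + fcc q r (2*k+2)| * q) := by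
          rw [add_mul, Finset.sum_mul]
      _ ≤ ((r:ℤ) - 1) + ∑ k ∈ Finset.range m, (2*(q:ℤ) - 3) := by
          apply add_le_add hf0.2
          apply Finset.sum_le_sum
          intro k hk
          exact pair_bound q r m k hq1 hr0 hcop hmq (Finset.mem_range.mp hk)
      _ = ((r:ℤ) - 1) + m * (2*(q:ℤ) - 3) := by
          rw [Finset.sum_const, Finset.card_range, nsmul_eq_mul]
      _ ≤ (r:ℤ) + q * (q - 1) := by
          have hmz : (q:ℤ) = 2*(m:ℤ) + 1 := by exact_mod_cast hmq
          have hmn : (0:ℤ) ≤ (m:ℤ) := Nat.cast_nonneg _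
          nlinarith [hmz, hmn]
  -- conclude over ℝ
  have habsR : |(A:ℝ) - (B:ℝ)| * q ≤ (r:ℝ) + q * (q - 1) := by
    exact_mod_cast habs
  have hfinal : |(A:ℝ) - (B:ℝ)| ≤ ((r:ℝ) + q * (q - 1)) / q := by
    rw [le_div_iff₀ hqR]
    exact habsR
  have heq : ((r:ℝ) + q * (q - 1)) / q = (r:ℝ)/q + q - 1 := by
    field_simp
    ring
  rw [heq] at hfinal
  exact hfinal
end

section
/- Let r be an odd prime, q a primitive root modulo r with 1 < q < √r, q odd. Then both sets M_0 and M_1 (indices i ∈ {1,...,r-1} where {q^i} - {q^{i+1}} is even, resp. odd) are nonempty; in fact |M_0| ≥ (r-1)/2 - (r/q + q - 1)/2 and |M_1| ≥ (r-1)/2 - (r/q + q - 1)/2. -/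
private lemma key_div (r q k j : ℕ) (hq1 : 1 < q) (hnd : ¬ q ∣ r)
    (hk : k < q) (hj : j < r / q) :
    q * (k * r / q + 1 + j) / r = k ∧ k * r / q + 1 + j ∈ Finset.Icc 1 (r - 1) := by
  have hq0 : 0 < q := by omega
  have hdm1 : q * (k * r / q) + k * r % q = k * r := Nat.div_add_mod (k * r) q
  have hdm2 : q * (r / q) + r % q = r := Nat.div_add_mod r q
  have he1 : k * r % q < q := Nat.mod_lt _ hq0
  have he2 : 1 ≤ r % q := by
    rcases Nat.eq_zero_or_pos (r % q) with h | h
    · exact absurd (Nat.dvd_of_mod_eq_zero h) hnd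
    · exact h
  have hqm : q * (r / q) + 1 ≤ r :=
    le_trans (Nat.add_le_add_left he2 _) (le_of_eq hdm2)
  have h5 : q * (j + 1) + 1 ≤ r :=
    le_trans (Nat.add_le_add_right (Nat.mul_le_mul_left _ (by omega : j + 1 ≤ r / q)) 1) hqm
  have hlo : k * r ≤ q * (k * r / q + 1 + j) := by
    calc k * r = q * (k * r / q) + k * r % q := hdm1.symm
      _ ≤ q * (k * r / q) + q := Nat.add_le_add_left he1.le _
      _ = q * (k * r / q + 1) := by ring
      _ ≤ q * (k * r / q + 1 + j) := Nat.mul_le_mul_left _ (by omega)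
  have hup : q * (k * r / q + 1 + j) < (k + 1) * r := by
    calc q * (k * r / q + 1 + j) = q * (k * r / q) + q * (j + 1) := by ring
      _ < q * (k * r / q) + r := Nat.add_lt_add_left (Nat.lt_of_succ_le h5) _
      _ ≤ k * r + r := Nat.add_le_add_right (Nat.le.intro hdm1) r
      _ = (k + 1) * r := by ring
  have hdiv : q * (k * r / q + 1 + j) / r = k := Nat.div_eq_of_lt_le hlo hup
  have hkr : (k + 1) * r ≤ q * r := Nat.mul_le_mul_right r (by omega)
  have hlt : k * r / q + 1 + j < r :=
    Nat.lt_of_mul_lt_mul_left (a := q) (lt_of_lt_of_le hup hkr)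
  exact ⟨hdiv, Finset.mem_Icc.mpr
    ⟨le_trans (Nat.le_add_left 1 (k * r / q)) (Nat.le_add_right _ j), Nat.le_sub_one_of_lt hlt⟩⟩

private lemma count_aux (r q w c : ℕ) (hq1 : 1 < q) (hnd : ¬ q ∣ r)
    (hw : ∀ k' < w, 2 * k' + c < q) :
    w * (r / q) ≤ ((Finset.Icc 1 (r - 1)).filter (fun a => q * a / r % 2 = c % 2)).card := by
  classical
  have hcard : ((Finset.range w) ×ˢ (Finset.range (r / q))).card = w * (r / q) := by simp
  rw [← hcard]
  apply Finset.card_le_card_of_injOn (fun p => (2 * p.1 + c) * r / q + 1 + p.2)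
  · rintro ⟨k', j⟩ hp
    simp only [Finset.mem_coe, Finset.mem_product, Finset.mem_range] at hp
    obtain ⟨h1, h2⟩ := key_div r q (2 * k' + c) j hq1 hnd (hw _ hp.1) hp.2
    simp only [Finset.mem_coe, Finset.mem_filter]
    refine ⟨h2, by rw [h1]; omega⟩
  · rintro ⟨k1, j1⟩ h1 ⟨k2, j2⟩ h2 heq
    simp only [Finset.coe_product, Set.mem_prod, Finset.mem_coe, Finset.mem_range] at h1 h2
    have e1 := (key_div r q (2 * k1 + c) j1 hq1 hnd (hw _ h1.1) h1.2).1
    have e2 := (key_div r q (2 * k2 + c) j2 hq1 hnd (hw _ h2.1) h2.2).1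
    simp only at heq
    have hk : 2 * k1 + c = 2 * k2 + c := by rw [← e1, ← e2, heq]
    have hk' : k1 = k2 := by omega
    subst hk'
    have hj : j1 = j2 := Nat.add_left_cancel heq
    simp [hj]

private lemma parity_eq (r q a : ℕ) (hrodd : Odd r) (hqodd : Odd q) :
    ((a : ℤ) - ((q * a % r : ℕ) : ℤ)) % 2 = ((q * a / r : ℕ) : ℤ) % 2 := by
  obtain ⟨s, hs⟩ := hrodd
  obtain ⟨t, ht⟩ := hqodd
  have hz : ((q * a : ℕ) : ℤ) = (r : ℤ) * ((q * a / r : ℕ) : ℤ) + ((q * a % r : ℕ) : ℤ) := by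
    exact_mod_cast (Nat.div_add_mod (q * a) r).symm
  have hkey : (a : ℤ) - ((q * a % r : ℕ) : ℤ) =
      ((q * a / r : ℕ) : ℤ) + 2 * ((s : ℤ) * ((q * a / r : ℕ) : ℤ) - (t : ℤ) * a) := by
    push_cast [hs, ht] at hz ⊢
    linear_combination hz
  rw [hkey, Int.add_mul_emod_self_left]

theorem stmt12 (r q : ℕ) (hr : r.Prime) (hrodd : Odd r)
    (hq : IsPrimitiveRoot (q : ZMod r) (r - 1)) (hqodd : Odd q)
    (hq1 : 1 < q) (hqr : (q : ℝ) < Real.sqrt r)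
    (M0 M1 : Finset ℕ)
    (hM0 : M0 = (Finset.Icc 1 (r - 1)).filter
      (fun i => (((q ^ i % r : ℕ) : ℤ) - ((q ^ (i + 1) % r : ℕ) : ℤ)) % 2 = 0))
    (hM1 : M1 = (Finset.Icc 1 (r - 1)).filter
      (fun i => (((q ^ i % r : ℕ) : ℤ) - ((q ^ (i + 1) % r : ℕ) : ℤ)) % 2 = 1)) :
    M0.Nonempty ∧ M1.Nonempty ∧
      ((r : ℝ) - 1) / 2 - ((r : ℝ) / q + q - 1) / 2 ≤ (M0.card : ℝ) ∧
      ((r : ℝ) - 1) / 2 - ((r : ℝ) / q + q - 1) / 2 ≤ (M1.card : ℝ) := by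
  classical
  haveI : Fact r.Prime := ⟨hr⟩
  have hr2 : r % 2 = 1 := Nat.odd_iff.mp hrodd
  have hq2 : q % 2 = 1 := Nat.odd_iff.mp hqodd
  have hr3 : 3 ≤ r := by have := hr.two_le; omega
  have hq3 : 3 ≤ q := by omega
  have hqq : q * q < r := by
    have h := (Real.lt_sqrt (by positivity)).mp hqr
    have h2 : ((q * q : ℕ) : ℝ) < (r : ℝ) := by push_cast; nlinarith
    exact_mod_cast h2
  have hqr' : q < r := by nlinarith
  have hnd : ¬ q ∣ r := by
    intro hdvd
    rcases (Nat.Prime.eq_one_or_self_of_dvd hr q hdvd) with h | h <;> omega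
  have hdm2 : q * (r / q) + r % q = r := Nat.div_add_mod r q
  have hm3 : 3 ≤ r / q := by
    have : q ≤ r / q := (Nat.le_div_iff_mul_le (by omega)).mpr (by nlinarith)
    omega
  set B0 : Finset ℕ := (Finset.Icc 1 (r - 1)).filter (fun a => q * a / r % 2 = 0) with hB0def
  set B1 : Finset ℕ := (Finset.Icc 1 (r - 1)).filter (fun a => q * a / r % 2 = 1) with hB1def
  have hcB0 : (q - 1) / 2 * (r / q) ≤ B0.card := by
    have := count_aux r q ((q - 1) / 2) 0 hq1 hnd (fun k' hk' => by omega)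
    simpa using this
  have hcB1 : (q - 1) / 2 * (r / q) ≤ B1.card := by
    have := count_aux r q ((q - 1) / 2) 1 hq1 hnd (fun k' hk' => by omega)
    simpa using this
  have hpow : ∀ i : ℕ, q ^ (i + 1) % r = q * (q ^ i % r) % r := by
    intro i
    conv_lhs => rw [pow_succ']
    rw [Nat.mul_mod, Nat.mod_eq_of_lt hqr']
  have hbridge : ∀ i : ℕ,
      (((q ^ i % r : ℕ) : ℤ) - ((q ^ (i + 1) % r : ℕ) : ℤ)) % 2
        = ((q * (q ^ i % r) / r : ℕ) : ℤ) % 2 := by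
    intro i
    rw [hpow i]
    exact parity_eq r q (q ^ i % r) hrodd hqodd
  have hmem : ∀ i : ℕ, q ^ i % r ∈ Finset.Icc 1 (r - 1) := by
    intro i
    have hlt : q ^ i % r < r := Nat.mod_lt _ (by omega)
    have hne : q ^ i % r ≠ 0 := by
      intro h0
      have h1 : r ∣ q ^ i := Nat.dvd_of_mod_eq_zero h0
      have h2 : r ∣ q := hr.dvd_of_dvd_pow h1
      have := Nat.le_of_dvd (by omega) h2
      omega
    exact Finset.mem_Icc.mpr ⟨by omega, by omega⟩
  have hinj : Set.InjOn (fun i => q ^ i % r) (Finset.Icc 1 (r - 1) : Finset ℕ) := by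
    have key : ∀ i j : ℕ, i ∈ Finset.Icc 1 (r - 1) → j ∈ Finset.Icc 1 (r - 1) →
        i ≤ j → q ^ i % r = q ^ j % r → i = j := by
      intro i j hi hj hle hij
      simp only [Finset.mem_Icc] at hi hj
      have hzm : (q : ZMod r) ^ i = (q : ZMod r) ^ j := by
        have h := congrArg (fun n : ℕ => (n : ZMod r)) hij
        simpa [ZMod.natCast_mod] using h
      have hqu : (q : ZMod r) ≠ 0 := (hq.isUnit (by omega)).ne_zero
      obtain ⟨d, rfl⟩ := Nat.exists_eq_add_of_le hle
      have hmul : (q : ZMod r) ^ i * (q : ZMod r) ^ d = (q : ZMod r) ^ i * 1 := by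
        rw [← pow_add, mul_one]; exact hzm.symm
      have hone : (q : ZMod r) ^ d = 1 := mul_left_cancel₀ (pow_ne_zero _ hqu) hmul
      have hdvd : (r - 1) ∣ d := (hq.pow_eq_one_iff_dvd d).mp hone
      have hd0 : d = 0 := by
        rcases Nat.eq_zero_or_pos d with h | h
        · exact h
        · have := Nat.le_of_dvd h hdvd; omega
      omega
    intro i hi j hj hij
    simp only [Finset.coe_Icc, Set.mem_Icc] at hi hj
    have hi' : i ∈ Finset.Icc 1 (r - 1) := Finset.mem_Icc.mpr hi
    have hj' : j ∈ Finset.Icc 1 (r - 1) := Finset.mem_Icc.mpr hj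
    rcases le_total i j with h | h
    · exact key i j hi' hj' h hij
    · exact (key j i hj' hi' h hij.symm).symm
  have hM0le : M0.card ≤ B0.card := by
    rw [hM0, hB0def]
    apply Finset.card_le_card_of_injOn (fun i => q ^ i % r)
    · intro i hi
      simp only [Finset.mem_coe, Finset.mem_filter] at hi ⊢
      refine ⟨hmem i, ?_⟩
      have h := hi.2
      rw [hbridge i] at h
      omega
    · apply hinj.mono
      intro x hx
      simp only [Finset.coe_filter, Set.mem_setOf_eq] at hx
      simpa using hx.1
  have hM1le : M1.card ≤ B1.card := by
    rw [hM1, hB1def]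
    apply Finset.card_le_card_of_injOn (fun i => q ^ i % r)
    · intro i hi
      simp only [Finset.mem_coe, Finset.mem_filter] at hi ⊢
      refine ⟨hmem i, ?_⟩
      have h := hi.2
      rw [hbridge i] at h
      omega
    · apply hinj.mono
      intro x hx
      simp only [Finset.coe_filter, Set.mem_setOf_eq] at hx
      simpa using hx.1
  have hMsum : M0.card + M1.card = (Finset.Icc 1 (r - 1)).card := by
    have h := Finset.card_filter_add_card_filter_not (s := Finset.Icc 1 (r - 1))
      (p := fun i => (((q ^ i % r : ℕ) : ℤ) - ((q ^ (i + 1) % r : ℕ) : ℤ)) % 2 = 0)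
    have heq : (Finset.Icc 1 (r - 1)).filter
          (fun i => ¬ (((q ^ i % r : ℕ) : ℤ) - ((q ^ (i + 1) % r : ℕ) : ℤ)) % 2 = 0)
        = (Finset.Icc 1 (r - 1)).filter
          (fun i => (((q ^ i % r : ℕ) : ℤ) - ((q ^ (i + 1) % r : ℕ) : ℤ)) % 2 = 1) := by
      apply Finset.filter_congr
      intro x _
      rcases Int.emod_two_eq (((q ^ x % r : ℕ) : ℤ) - ((q ^ (x + 1) % r : ℕ) : ℤ)) with h' | h' <;>
        simp [h']
    rw [heq] at h
    rw [hM0, hM1]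
    exact h
  have hBsum : B0.card + B1.card = (Finset.Icc 1 (r - 1)).card := by
    have h := Finset.card_filter_add_card_filter_not (s := Finset.Icc 1 (r - 1))
      (p := fun a => q * a / r % 2 = 0)
    have heq : (Finset.Icc 1 (r - 1)).filter (fun a => ¬ q * a / r % 2 = 0)
        = (Finset.Icc 1 (r - 1)).filter (fun a => q * a / r % 2 = 1) := by
      apply Finset.filter_congr
      intro x _
      constructor
      · intro h'; omega
      · intro h'; omega
    rw [heq] at h
    rw [hB0def, hB1def]
    exact h
  have hM0eq : M0.card = B0.card := by omega
  have hM1eq : M1.card = B1.card := by omega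
  have hq0 : (0 : ℝ) < (q : ℝ) := by positivity
  have h1 : ((r / q : ℕ) : ℝ) ≤ (r : ℝ) / q := by
    rw [le_div_iff₀ hq0]
    exact_mod_cast Nat.div_mul_le_self r q
  have h2 : (r : ℝ) < (q : ℝ) * ((r / q : ℕ) : ℝ) + q := by
    have h : r < q * (r / q) + q := by
      have := Nat.mod_lt r (show 0 < q by omega)
      omega
    exact_mod_cast h
  have hW : 2 * (((q - 1) / 2 : ℕ) : ℝ) = (q : ℝ) - 1 := by
    have h : ((q - 1) / 2) * 2 = q - 1 := by omega
    have h' : (((q - 1) / 2 : ℕ) : ℝ) * 2 = ((q - 1 : ℕ) : ℝ) := by exact_mod_cast congrArg (fun n : ℕ => (n : ℝ)) h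
    rw [Nat.cast_sub (by omega)] at h'
    push_cast at h' ⊢
    linarith
  have hbound : ((r : ℝ) - 1) / 2 - ((r : ℝ) / q + q - 1) / 2
      ≤ ((((q - 1) / 2) * (r / q) : ℕ) : ℝ) := by
    push_cast
    nlinarith [h1, h2, hW, (show (0:ℝ) ≤ ((r / q : ℕ) : ℝ) from Nat.cast_nonneg _),
      (show (3 : ℝ) ≤ ((r / q : ℕ) : ℝ) by exact_mod_cast hm3),
      (show (3 : ℝ) ≤ (q : ℝ) by exact_mod_cast hq3)]
  have hfin0 : ((r : ℝ) - 1) / 2 - ((r : ℝ) / q + q - 1) / 2 ≤ (M0.card : ℝ) := by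
    refine le_trans hbound ?_
    rw [hM0eq]
    exact_mod_cast hcB0
  have hfin1 : ((r : ℝ) - 1) / 2 - ((r : ℝ) / q + q - 1) / 2 ≤ (M1.card : ℝ) := by
    refine le_trans hbound ?_
    rw [hM1eq]
    exact_mod_cast hcB1
  have hw1 : 1 ≤ ((q - 1) / 2) * (r / q) :=
    Nat.one_le_iff_ne_zero.mpr (Nat.mul_ne_zero (by omega) (by omega))
  have hne0 : M0.Nonempty := by
    rw [← Finset.card_pos, hM0eq]; omega
  have hne1 : M1.Nonempty := by
    rw [← Finset.card_pos, hM1eq]; omega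
  exact ⟨hne0, hne1, hfin0, hfin1⟩
end
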